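/- Appendix A entropy bound: For every power of 2 n and every k ∈ {1,2} (k̄ the other index), H( A[H^{(n)}_{V|Z}], T_{(k)}[H^{(n)}_{U_k|VZ}], T_{(k̄)}[H^{(n)}_{U_k̄|V U_k Z}] | Z^n ) ≥ (1 − δ_n) · ( |H^{(n)}_{V|Z}| + |H^{(n)}_{U_k|VZ}| + |H^{(n)}_{U_k̄|V U_k Z}| ). -/

import Mathlib

open scoped BigOperators

noncomputable section

namespace WTpaper

/-- A probability mass function on a finite type. -/
def IsPMF {Ω : Type*} [Fintype Ω] (μ : Ω → ℝ) : Prop :=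
  (∀ ω, 0 ≤ μ ω) ∧ ∑ ω, μ ω = 1

/-- `Finset.filter` over the whole type, with classical decidability. -/
def cfilter {α : Type*} [Fintype α] (p : α → Prop) : Finset α :=
  @Finset.filter α p (Classical.decPred p) Finset.univ

/-- Probability of an event. -/
def prob {Ω : Type*} [Fintype Ω] (μ : Ω → ℝ) (p : Ω → Prop) : ℝ :=
  ∑ ω ∈ cfilter p, μ ω

/-- Probability that a random variable takes a given value. -/
def probOf {Ω α : Type*} [Fintype Ω] (μ : Ω → ℝ) (X : Ω → α) (x : α) : ℝ :=
  prob μ (fun ω => X ω = x)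

/-- Shannon entropy (in bits) of a random variable on a finite probability space. -/
def ent {Ω α : Type*} [Fintype Ω] [Fintype α] (μ : Ω → ℝ) (X : Ω → α) : ℝ :=
  -∑ x : α, probOf μ X x * Real.logb 2 (probOf μ X x)

/-- Conditional Shannon entropy `H(X | Y)` (in bits). -/
def condEnt {Ω α β : Type*} [Fintype Ω] [Fintype α] [Fintype β]
    (μ : Ω → ℝ) (X : Ω → α) (Y : Ω → β) : ℝ :=
  ent μ (fun ω => (X ω, Y ω)) - ent μ Y

/-- Mutual information `I(X ; Y)` (in bits). -/
def mutInfo {Ω α β : Type*} [Fintype Ω] [Fintype α] [Fintype β]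
    (μ : Ω → ℝ) (X : Ω → α) (Y : Ω → β) : ℝ :=
  ent μ X + ent μ Y - ent μ (fun ω => (X ω, Y ω))

/-- Conditional mutual information `I(X ; Y | Z)` (in bits). -/
def condMutInfo {Ω α β γ : Type*} [Fintype Ω] [Fintype α] [Fintype β] [Fintype γ]
    (μ : Ω → ℝ) (X : Ω → α) (Y : Ω → β) (Z : Ω → γ) : ℝ :=
  condEnt μ X Z - condEnt μ X (fun ω => (Y ω, Z ω))

/-- The Markov chain `A − B − C`: `P(A,B,C) P(B) = P(A,B) P(B,C)`. -/
def MarkovChain {Ω α β γ : Type*} [Fintype Ω] (μ : Ω → ℝ)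
    (A : Ω → α) (B : Ω → β) (C : Ω → γ) : Prop :=
  ∀ a b c,
    probOf μ (fun ω => (A ω, B ω, C ω)) (a, b, c) * probOf μ B b =
      probOf μ (fun ω => (A ω, B ω)) (a, b) * probOf μ (fun ω => (B ω, C ω)) (b, c)

/-- `δ_n = 2^{-n^β}`. -/
def deltaN (β : ℝ) (n : ℕ) : ℝ := (2 : ℝ) ^ (-((n : ℝ) ^ β))

/-- Arıkan's polarization kernel. -/
def g2 : Matrix (Fin 2) (Fin 2) (ZMod 2) := !![1, 1; 1, 0]

def twoPowEquiv (m : ℕ) : Fin 2 × Fin (2 ^ m) ≃ Fin (2 ^ (m + 1)) :=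
  finProdFinEquiv.trans (finCongr (by rw [pow_succ]; exact Nat.mul_comm 2 (2 ^ m)))

/-- The source polarization matrix `G_n = [[1,1],[1,0]]^{⊗ m}`, with `n = 2^m`. -/
def polarG : (m : ℕ) → Matrix (Fin (2 ^ m)) (Fin (2 ^ m)) (ZMod 2)
  | 0 => 1
  | m + 1 =>
      Matrix.reindex (twoPowEquiv m) (twoPowEquiv m)
        (Matrix.kroneckerMap (· * ·) g2 (polarG m))

/-- The distribution of `n` i.i.d. copies of a source. -/
def iid {Ω : Type*} [Fintype Ω] (μ : Ω → ℝ) (n : ℕ) : (Fin n → Ω) → ℝ :=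
  fun ω => ∏ i, μ (ω i)

/-- The polar transform `U^n = X^n G_n` of the `n` i.i.d. copies of `X`. -/
def polarVec {Ω : Type*} (X : Ω → ZMod 2) (m : ℕ) (ω : Fin (2 ^ m) → Ω) :
    Fin (2 ^ m) → ZMod 2 :=
  Matrix.vecMul (fun i => X (ω i)) (polarG m)

/-- The prefix `U^{1:j-1}` of the polar transform. -/
def prefixVec {Ω : Type*} (X : Ω → ZMod 2) (m : ℕ) (j : Fin (2 ^ m))
    (ω : Fin (2 ^ m) → Ω) : Fin j.1 → ZMod 2 :=
  fun i => polarVec X m ω (Fin.castLE j.2.le i)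

/-- `H^{(n)}_{X|S} = { j : H(U(j) | U^{1:j-1}, S^n) ≥ 1 - δ_n }`, where `n = 2^m`. -/
def highSet {Ω σ : Type*} [Fintype Ω] [Fintype σ] (μ : Ω → ℝ) (X : Ω → ZMod 2)
    (S : Ω → σ) (β : ℝ) (m : ℕ) : Finset (Fin (2 ^ m)) :=
  cfilter fun j =>
    1 - deltaN β (2 ^ m) ≤
      condEnt (iid μ (2 ^ m)) (fun ω => polarVec X m ω j)
        (fun ω => (prefixVec X m j ω, fun i => S (ω i)))

/-- `L^{(n)}_{X|S} = { j : H(U(j) | U^{1:j-1}, S^n) ≤ δ_n }`, where `n = 2^m`. -/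
def lowSet {Ω σ : Type*} [Fintype Ω] [Fintype σ] (μ : Ω → ℝ) (X : Ω → ZMod 2)
    (S : Ω → σ) (β : ℝ) (m : ℕ) : Finset (Fin (2 ^ m)) :=
  cfilter fun j =>
    condEnt (iid μ (2 ^ m)) (fun ω => polarVec X m ω j)
        (fun ω => (prefixVec X m j ω, fun i => S (ω i))) ≤
      deltaN β (2 ^ m)

/-- `H^{(n)}_{X} = { j : H(U(j) | U^{1:j-1}) ≥ 1 - δ_n }` (no side information). -/
def highSet0 {Ω : Type*} [Fintype Ω] (μ : Ω → ℝ) (X : Ω → ZMod 2)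
    (β : ℝ) (m : ℕ) : Finset (Fin (2 ^ m)) :=
  cfilter fun j =>
    1 - deltaN β (2 ^ m) ≤
      condEnt (iid μ (2 ^ m)) (fun ω => polarVec X m ω j) (prefixVec X m j)

/-- `L^{(n)}_{X} = { j : H(U(j) | U^{1:j-1}) ≤ δ_n }` (no side information). -/
def lowSet0 {Ω : Type*} [Fintype Ω] (μ : Ω → ℝ) (X : Ω → ZMod 2)
    (β : ℝ) (m : ℕ) : Finset (Fin (2 ^ m)) :=
  cfilter fun j =>
    condEnt (iid μ (2 ^ m)) (fun ω => polarVec X m ω j) (prefixVec X m j) ≤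
      deltaN β (2 ^ m)

/-- The subvector `X[𝒜]`. -/
def restr {n : ℕ} {γ : Type*} (A : Finset (Fin n)) (v : Fin n → γ) :
    {j // j ∈ A} → γ :=
  fun j => v j.1

/-- The triple of secured subvectors
`(A[H^{(n)}_{V|Z}], T_{(k)}[H^{(n)}_{U_k|VZ}], T_{(k̄)}[H^{(n)}_{U_k̄|V U_k Z}])`
extracted from given realizations of the three polar-transformed layers.
`Ua` plays the role of `U_k` and `Ub` that of `U_k̄`. -/
def secTriple {Ω 𝒵 : Type*} [Fintype Ω] [Fintype 𝒵]
    (μ : Ω → ℝ) (V Ua Ub : Ω → ZMod 2) (Z : Ω → 𝒵) (β : ℝ) (m : ℕ)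
    (a ta tb : Fin (2 ^ m) → ZMod 2) :=
  (restr (highSet μ V Z β m) a,
   restr (highSet μ Ua (fun ω => (V ω, Z ω)) β m) ta,
   restr (highSet μ Ub (fun ω => (V ω, Ua ω, Z ω)) β m) tb)


section AuxLemmas

variable {Ω α β γ : Type*} [Fintype Ω] {μ : Ω → ℝ}

lemma probOf_eq_sum_ite [DecidableEq α] (X : Ω → α) (x : α) :
    probOf μ X x = ∑ ω, if X ω = x then μ ω else 0 := by
  classical
  unfold probOf prob cfilter
  rw [Finset.sum_filter]
  exact Finset.sum_congr rfl fun ω _ => by congr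

lemma probOf_nonneg (hμ : ∀ ω, 0 ≤ μ ω) (X : Ω → α) (x : α) : 0 ≤ probOf μ X x := by
  classical
  rw [probOf_eq_sum_ite]
  exact Finset.sum_nonneg fun ω _ => by split <;> simp [hμ ω]

lemma probOf_comp_eq_sum [Fintype α] [DecidableEq α] [DecidableEq β]
    (W : Ω → α) (g : α → β) (b : β) :
    probOf μ (fun ω => g (W ω)) b = ∑ a : α, if g a = b then probOf μ W a else 0 := by
  classical
  rw [probOf_eq_sum_ite]
  have key : ∀ a : α, (if g a = b then probOf μ W a else 0)
      = ∑ ω, if W ω = a then (if g (W ω) = b then μ ω else 0) else 0 := by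
    intro a
    by_cases h : g a = b
    · rw [if_pos h, probOf_eq_sum_ite]
      refine Finset.sum_congr rfl fun ω _ => ?_
      by_cases hw : W ω = a
      · rw [if_pos hw, if_pos hw, if_pos (hw ▸ h)]
      · rw [if_neg hw, if_neg hw]
    · rw [if_neg h]
      refine (Finset.sum_eq_zero fun ω _ => ?_).symm
      by_cases hw : W ω = a
      · rw [if_pos hw, if_neg (hw ▸ h : ¬ g (W ω) = b)]
      · rw [if_neg hw]
  rw [Finset.sum_congr rfl fun a _ => key a, Finset.sum_comm]
  refine Finset.sum_congr rfl fun ω _ => ?_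
  rw [Finset.sum_ite_eq Finset.univ (W ω)]
  simp


lemma probOf_comp_inj (f : α → β) (hf : Function.Injective f) (X : Ω → α) (x : α) :
    probOf μ (fun ω => f (X ω)) (f x) = probOf μ X x := by
  classical
  rw [probOf_eq_sum_ite, probOf_eq_sum_ite]
  refine Finset.sum_congr rfl fun ω _ => ?_
  simp [hf.eq_iff]

lemma probOf_comp_zero (f : α → β) (X : Ω → α) {y : β} (hy : ∀ x, f x ≠ y) :
    probOf μ (fun ω => f (X ω)) y = 0 := by
  classical
  rw [probOf_eq_sum_ite]
  exact Finset.sum_eq_zero fun ω _ => by simp [hy (X ω)]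

lemma ent_comp_inj [Fintype α] [Fintype β] (f : α → β) (hf : Function.Injective f)
    (X : Ω → α) : ent μ (fun ω => f (X ω)) = ent μ X := by
  classical
  unfold ent
  congr 1
  have h1 : ∑ y : β, probOf μ (fun ω => f (X ω)) y * Real.logb 2 (probOf μ (fun ω => f (X ω)) y)
      = ∑ y ∈ Finset.image f Finset.univ,
          probOf μ (fun ω => f (X ω)) y * Real.logb 2 (probOf μ (fun ω => f (X ω)) y) := by
    refine (Finset.sum_subset (Finset.subset_univ _) ?_).symm
    intro y _ hy
    rw [probOf_comp_zero f X, zero_mul]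
    intro x hx
    exact hy (hx ▸ Finset.mem_image_of_mem f (Finset.mem_univ x))
  rw [h1, Finset.sum_image (fun a _ b _ h => hf h)]
  refine Finset.sum_congr rfl fun x _ => ?_
  rw [probOf_comp_inj f hf]

lemma ent_comp_le [Fintype α] [Fintype β] (hμ : ∀ ω, 0 ≤ μ ω) (g : α → β) (W : Ω → α) :
    ent μ (fun ω => g (W ω)) ≤ ent μ W := by
  classical
  unfold ent
  rw [neg_le_neg_iff]
  have key : ∀ b : β, probOf μ (fun ω => g (W ω)) b * Real.logb 2 (probOf μ (fun ω => g (W ω)) b)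
      = ∑ a : α, if g a = b then probOf μ W a * Real.logb 2 (probOf μ (fun ω => g (W ω)) (g a)) else 0 := by
    intro b
    rw [probOf_comp_eq_sum, Finset.sum_mul]
    refine Finset.sum_congr rfl fun a _ => ?_
    by_cases h : g a = b
    · rw [if_pos h, if_pos h, ← probOf_comp_eq_sum, h]
    · rw [if_neg h, if_neg h, zero_mul]
  calc ∑ a : α, probOf μ W a * Real.logb 2 (probOf μ W a)
      ≤ ∑ a : α, probOf μ W a * Real.logb 2 (probOf μ (fun ω => g (W ω)) (g a)) := by
        refine Finset.sum_le_sum fun a _ => ?_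
        rcases eq_or_lt_of_le (probOf_nonneg hμ W a) with h0 | h0
        · rw [← h0, zero_mul, zero_mul]
        · refine mul_le_mul_of_nonneg_left ?_ h0.le
          refine Real.logb_le_logb_of_le one_lt_two h0 ?_
          rw [probOf_comp_eq_sum (μ := μ) W g (g a)]
          have := Finset.single_le_sum
            (f := fun a' : α => if g a' = g a then probOf μ W a' else 0)
            (fun a' _ => by
              by_cases h : g a' = g a <;> simp [h, probOf_nonneg hμ])
            (Finset.mem_univ a)
          simpa using this
    _ = ∑ b : β, probOf μ (fun ω => g (W ω)) b * Real.logb 2 (probOf μ (fun ω => g (W ω)) b) := by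
        rw [Finset.sum_congr rfl fun b _ => key b, Finset.sum_comm]
        refine Finset.sum_congr rfl fun a _ => ?_
        rw [Finset.sum_ite_eq Finset.univ (g a)]
        simp

lemma condEnt_nonneg [Fintype α] [Fintype β] (hμ : ∀ ω, 0 ≤ μ ω) (X : Ω → α) (S : Ω → β) :
    0 ≤ condEnt μ X S :=
  sub_nonneg.2 (ent_comp_le hμ Prod.snd (fun ω => (X ω, S ω)))

lemma condEnt_chain [Fintype α] [Fintype β] [Fintype γ]
    (P : Ω → α) (Q : Ω → β) (S : Ω → γ) :
    condEnt μ (fun ω => (P ω, Q ω)) S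
      = condEnt μ P S + condEnt μ Q (fun ω => (P ω, S ω)) := by
  have h : ent μ (fun ω => ((P ω, Q ω), S ω)) = ent μ (fun ω => (Q ω, (P ω, S ω))) := by
    have hf : Function.Injective (fun x : β × α × γ => ((x.2.1, x.1), x.2.2)) := by
      intro x y h
      simp only [Prod.mk.injEq] at h
      exact Prod.ext h.1.2 (Prod.ext h.1.1 h.2)
    simpa using ent_comp_inj (μ := μ) _ hf (fun ω => (Q ω, (P ω, S ω)))
  unfold condEnt
  rw [h]
  ring

lemma condEnt_pair_le [Fintype α] [Fintype β] [Fintype γ] (hμ : ∀ ω, 0 ≤ μ ω)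
    (X : Ω → α) (Y : Ω → β) (S : Ω → γ) :
    condEnt μ X (fun ω => (Y ω, S ω)) ≤ condEnt μ X S := by
  classical
  set q : α → β → γ → ℝ := fun x y z => probOf μ (fun ω => (X ω, Y ω, S ω)) (x, y, z) with hq
  set pXZ : α → γ → ℝ := fun x z => ∑ y, q x y z with hpXZ
  set pYZ : β → γ → ℝ := fun y z => ∑ x, q x y z with hpYZ
  set pZ : γ → ℝ := fun z => ∑ x, pXZ x z with hpZ
  have hq0 : ∀ x y z, 0 ≤ q x y z := fun x y z => probOf_nonneg hμ _ _
  -- marginals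
  have hXZ : ∀ x z, probOf μ (fun ω => (X ω, S ω)) (x, z) = pXZ x z := by
    intro x z
    have h := probOf_comp_eq_sum (μ := μ) (fun ω => (X ω, Y ω, S ω))
        (fun t => (t.1, t.2.2)) (x, z)
    dsimp only at h
    rw [h, Fintype.sum_prod_type]
    simp [Prod.ext_iff, ite_and, Finset.sum_ite_eq', Fintype.sum_prod_type, hq]
    rfl
  have hYZ : ∀ y z, probOf μ (fun ω => (Y ω, S ω)) (y, z) = pYZ y z := by
    intro y z
    have h := probOf_comp_eq_sum (μ := μ) (fun ω => (X ω, Y ω, S ω))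
        (fun t => t.2) (y, z)
    dsimp only at h
    rw [h, Fintype.sum_prod_type]
    simp [Prod.ext_iff, ite_and, Finset.sum_ite_eq', Fintype.sum_prod_type, hq]
    rfl
  have hZ : ∀ z, probOf μ S z = pZ z := by
    intro z
    have h := probOf_comp_eq_sum (μ := μ) (fun ω => (X ω, Y ω, S ω))
        (fun t => t.2.2) z
    dsimp only at h
    rw [show probOf μ S z = probOf μ (fun ω => S ω) z from rfl, h, Fintype.sum_prod_type]
    simp [Finset.sum_ite_eq', Fintype.sum_prod_type, hq, hpXZ, hpZ]
  -- entropy expansions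
  have E1 : ent μ (fun ω => (X ω, (Y ω, S ω))) = -∑ x, ∑ y, ∑ z, q x y z * Real.logb 2 (q x y z) := by
    unfold ent
    rw [Fintype.sum_prod_type]
    congr 1
    refine Finset.sum_congr rfl fun x _ => ?_
    rw [Fintype.sum_prod_type]
  have E2 : ent μ (fun ω => (X ω, S ω)) = -∑ x, ∑ z, pXZ x z * Real.logb 2 (pXZ x z) := by
    unfold ent
    rw [Fintype.sum_prod_type]
    congr 1
    refine Finset.sum_congr rfl fun x _ => Finset.sum_congr rfl fun z _ => ?_
    rw [hXZ]
  have E3 : ent μ (fun ω => (Y ω, S ω)) = -∑ y, ∑ z, pYZ y z * Real.logb 2 (pYZ y z) := by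
    unfold ent
    rw [Fintype.sum_prod_type]
    congr 1
    refine Finset.sum_congr rfl fun y _ => Finset.sum_congr rfl fun z _ => ?_
    rw [hYZ]
  have E4 : ent μ S = -∑ z, pZ z * Real.logb 2 (pZ z) := by
    unfold ent
    congr 1
    refine Finset.sum_congr rfl fun z _ => ?_
    rw [hZ]
  set L : ℝ → ℝ := fun t => Real.logb 2 t with hL
  have hlog2 : (0:ℝ) < Real.log 2 := Real.log_pos one_lt_two
  -- lifted sums
  have LXZ : ∑ x, ∑ z, pXZ x z * L (pXZ x z) = ∑ x, ∑ y, ∑ z, q x y z * L (pXZ x z) := by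
    refine Finset.sum_congr rfl fun x _ => ?_
    rw [Finset.sum_comm]
    exact Finset.sum_congr rfl fun z _ => Finset.sum_mul _ _ _
  have LYZ : ∑ y, ∑ z, pYZ y z * L (pYZ y z) = ∑ x, ∑ y, ∑ z, q x y z * L (pYZ y z) := by
    have h1 : ∑ y, ∑ z, pYZ y z * L (pYZ y z) = ∑ y, ∑ z, ∑ x, q x y z * L (pYZ y z) :=
      Finset.sum_congr rfl fun y _ => Finset.sum_congr rfl fun z _ => Finset.sum_mul _ _ _
    rw [h1]
    rw [show ∑ y, ∑ z, ∑ x, q x y z * L (pYZ y z) = ∑ y, ∑ x, ∑ z, q x y z * L (pYZ y z) from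
      Finset.sum_congr rfl fun y _ => Finset.sum_comm]
    exact Finset.sum_comm
  have LZ : ∑ z, pZ z * L (pZ z) = ∑ x, ∑ y, ∑ z, q x y z * L (pZ z) := by
    have h1 : ∑ z, pZ z * L (pZ z) = ∑ z, ∑ x, ∑ y, q x y z * L (pZ z) :=
      Finset.sum_congr rfl fun z _ => by
        rw [show pZ z * L (pZ z) = ∑ x, pXZ x z * L (pZ z) from Finset.sum_mul _ _ _]
        exact Finset.sum_congr rfl fun x _ => Finset.sum_mul _ _ _
    rw [h1, Finset.sum_comm]
    exact Finset.sum_congr rfl fun x _ => Finset.sum_comm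
  -- the comparison function
  set r : α → β → γ → ℝ := fun x y z => if pZ z = 0 then 0 else pXZ x z * pYZ y z / pZ z with hr
  have hpXZ0 : ∀ x z, 0 ≤ pXZ x z := fun x z => Finset.sum_nonneg fun y _ => hq0 x y z
  have hpYZ0 : ∀ y z, 0 ≤ pYZ y z := fun y z => Finset.sum_nonneg fun x _ => hq0 x y z
  have hpZ0 : ∀ z, 0 ≤ pZ z := fun z => Finset.sum_nonneg fun x _ => hpXZ0 x z
  have hr0 : ∀ x y z, 0 ≤ r x y z := by
    intro x y z
    by_cases h : pZ z = 0
    · simp [hr, h]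
    · simp only [hr, if_neg h]
      exact div_nonneg (mul_nonneg (hpXZ0 x z) (hpYZ0 y z)) (hpZ0 z)
  -- per-term bound
  have key : ∀ x y z,
      q x y z * L (pXZ x z) + q x y z * L (pYZ y z) - q x y z * L (q x y z)
        - q x y z * L (pZ z) ≤ (r x y z - q x y z) / Real.log 2 := by
    intro x y z
    rcases eq_or_lt_of_le (hq0 x y z) with h0 | h0
    · rw [← h0]
      have hz : (0:ℝ) * L (pXZ x z) + 0 * L (pYZ y z) - 0 * L 0 - 0 * L (pZ z) = 0 := by ring
      rw [hz, sub_zero]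
      exact div_nonneg (hr0 x y z) hlog2.le
    · have hqXZ : q x y z ≤ pXZ x z := Finset.single_le_sum (fun y' _ => hq0 x y' z) (Finset.mem_univ y)
      have hqYZ : q x y z ≤ pYZ y z := Finset.single_le_sum (fun x' _ => hq0 x' y z) (Finset.mem_univ x)
      have hqZ : q x y z ≤ pZ z :=
        hqXZ.trans (Finset.single_le_sum (f := fun x' => pXZ x' z) (fun x' _ => hpXZ0 x' z) (Finset.mem_univ x))
      have hXZpos : 0 < pXZ x z := lt_of_lt_of_le h0 hqXZ
      have hYZpos : 0 < pYZ y z := lt_of_lt_of_le h0 hqYZ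
      have hZpos : 0 < pZ z := lt_of_lt_of_le h0 hqZ
      have hrpos : 0 < r x y z := by
        rw [hr]
        simp only [if_neg hZpos.ne']
        exact div_pos (mul_pos hXZpos hYZpos) hZpos
      have hlogeq : L (pXZ x z) + L (pYZ y z) - L (q x y z) - L (pZ z)
          = Real.log (r x y z / q x y z) / Real.log 2 := by
        have hrq : r x y z / q x y z = pXZ x z * pYZ y z / (pZ z * q x y z) := by
          rw [hr]
          simp only [if_neg hZpos.ne']
          rw [div_div]
        rw [hrq, Real.log_div (mul_pos hXZpos hYZpos).ne' (mul_pos hZpos h0).ne',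
          Real.log_mul hXZpos.ne' hYZpos.ne', Real.log_mul hZpos.ne' h0.ne',
          hL]
        simp only [Real.logb]
        ring
      have hlog_le : Real.log (r x y z / q x y z) ≤ r x y z / q x y z - 1 :=
        Real.log_le_sub_one_of_pos (div_pos hrpos h0)
      have step : q x y z * (Real.log (r x y z / q x y z)) ≤ r x y z - q x y z := by
        calc q x y z * Real.log (r x y z / q x y z) ≤ q x y z * (r x y z / q x y z - 1) :=
              mul_le_mul_of_nonneg_left hlog_le h0.le
          _ = r x y z - q x y z := by field_simp
      calc q x y z * L (pXZ x z) + q x y z * L (pYZ y z) - q x y z * L (q x y z)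
            - q x y z * L (pZ z)
          = q x y z * (L (pXZ x z) + L (pYZ y z) - L (q x y z) - L (pZ z)) := by ring
        _ = q x y z * Real.log (r x y z / q x y z) / Real.log 2 := by rw [hlogeq]; ring
        _ ≤ (r x y z - q x y z) / Real.log 2 := (div_le_div_iff_of_pos_right hlog2).mpr step
  have reorder : ∀ f : α → β → γ → ℝ, ∑ x, ∑ y, ∑ z, f x y z = ∑ z, ∑ x, ∑ y, f x y z := by
    intro f
    rw [show (∑ x, ∑ y, ∑ z, f x y z) = ∑ x, ∑ z, ∑ y, f x y z from
      Finset.sum_congr rfl fun x _ => Finset.sum_comm]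
    exact Finset.sum_comm
  have hsum_r_le : ∑ x, ∑ y, ∑ z, r x y z ≤ ∑ x, ∑ y, ∑ z, q x y z := by
    rw [reorder r, reorder q]
    refine Finset.sum_le_sum fun z _ => ?_
    by_cases h : pZ z = 0
    · have hz : ∀ x y, r x y z = 0 := fun x y => by simp [hr, h]
      calc ∑ x, ∑ y, r x y z = 0 := by simp [hz]
        _ ≤ ∑ x, ∑ y, q x y z :=
          Finset.sum_nonneg fun x _ => Finset.sum_nonneg fun y _ => hq0 x y z
    · have h1 : ∑ x, ∑ y, r x y z = ∑ x, pXZ x z * pZ z / pZ z := by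
        refine Finset.sum_congr rfl fun x _ => ?_
        have hry : ∑ y, r x y z = ∑ y, pXZ x z * pYZ y z / pZ z :=
          Finset.sum_congr rfl fun y _ => by simp [hr, h]
        rw [hry, ← Finset.sum_div, ← Finset.mul_sum]
        congr 2
        rw [show ∑ y, pYZ y z = ∑ y, ∑ x, q x y z from rfl, Finset.sum_comm]
      rw [h1]
      have h2 : ∀ x, pXZ x z * pZ z / pZ z = pXZ x z := fun x => by
        rw [mul_div_assoc, div_self h, mul_one]
      rw [Finset.sum_congr rfl fun x _ => h2 x]
  have main : ∑ x, ∑ y, ∑ z, (q x y z * L (pXZ x z) + q x y z * L (pYZ y z)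
      - q x y z * L (q x y z) - q x y z * L (pZ z)) ≤ 0 := by
    calc ∑ x, ∑ y, ∑ z, (q x y z * L (pXZ x z) + q x y z * L (pYZ y z)
          - q x y z * L (q x y z) - q x y z * L (pZ z))
        ≤ ∑ x, ∑ y, ∑ z, (r x y z - q x y z) / Real.log 2 :=
          Finset.sum_le_sum fun x _ => Finset.sum_le_sum fun y _ =>
            Finset.sum_le_sum fun z _ => key x y z
      _ = ((∑ x, ∑ y, ∑ z, r x y z) - (∑ x, ∑ y, ∑ z, q x y z)) / Real.log 2 := by
          simp only [← Finset.sum_div, Finset.sum_sub_distrib]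
      _ ≤ 0 := div_nonpos_of_nonpos_of_nonneg (sub_nonpos.2 hsum_r_le) hlog2.le
  have split : ∑ x, ∑ y, ∑ z, (q x y z * L (pXZ x z) + q x y z * L (pYZ y z)
      - q x y z * L (q x y z) - q x y z * L (pZ z))
      = (∑ x, ∑ y, ∑ z, q x y z * L (pXZ x z)) + (∑ x, ∑ y, ∑ z, q x y z * L (pYZ y z))
        - (∑ x, ∑ y, ∑ z, q x y z * L (q x y z)) - (∑ x, ∑ y, ∑ z, q x y z * L (pZ z)) := by
    simp only [Finset.sum_sub_distrib, Finset.sum_add_distrib]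
  simp only [condEnt]
  rw [E1, E2, E3, E4]
  simp only [hL] at main split LXZ LYZ LZ
  linarith [main, split, LXZ, LYZ, LZ]


lemma condEnt_comp_le {δ ε : Type*} [Fintype α] [Fintype δ] [Fintype ε]
    (hμ : ∀ ω, 0 ≤ μ ω) (X : Ω → α) (W : Ω → δ) (f : δ → ε) :
    condEnt μ X W ≤ condEnt μ X (fun ω => f (W ω)) := by
  have h1 : condEnt μ X W = condEnt μ X (fun ω => (W ω, f (W ω))) := by
    unfold condEnt
    have e1 : ent μ (fun ω => (X ω, (W ω, f (W ω)))) = ent μ (fun ω => (X ω, W ω)) := by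
      have hg : Function.Injective (fun p : α × δ => (p.1, (p.2, f p.2))) := by
        intro p p' h
        simp only [Prod.mk.injEq] at h
        exact Prod.ext h.1 h.2.1
      simpa using ent_comp_inj (μ := μ) _ hg (fun ω => (X ω, W ω))
    have e2 : ent μ (fun ω => (W ω, f (W ω))) = ent μ W := by
      have hg : Function.Injective (fun w : δ => (w, f w)) := fun w w' h => congrArg Prod.fst h
      simpa using ent_comp_inj (μ := μ) _ hg W
    rw [e1, e2]
  rw [h1]
  exact condEnt_pair_le hμ X W (fun ω => f (W ω))

lemma sum_le_condEnt_restr {σ : Type*} [Fintype σ] (hμ : ∀ ω, 0 ≤ μ ω) {n : ℕ}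
    (X : Fin n → Ω → ZMod 2) (S : Ω → σ) (A : Finset (Fin n)) :
    ∑ j ∈ A, condEnt μ (X j)
        (fun ω => ((fun i : Fin j.1 => X (Fin.castLE j.2.le i) ω), S ω))
      ≤ condEnt μ (fun ω => restr A (fun i => X i ω)) S := by
  classical
  induction A using Finset.induction_on_max with
  | empty => simpa using condEnt_nonneg hμ (fun ω => restr (∅ : Finset (Fin n)) (fun i => X i ω)) S
  | insert a s ha ih =>
    have hanm : a ∉ s := fun h => lt_irrefl a (ha a h)
    rw [Finset.sum_insert hanm]
    have he : Function.Injective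
        (fun v : ({j // j ∈ insert a s} → ZMod 2) =>
          ((fun j : {j // j ∈ s} => v ⟨j.1, Finset.mem_insert_of_mem j.2⟩),
            v ⟨a, Finset.mem_insert_self a s⟩)) := by
      intro v w h
      simp only [Prod.mk.injEq] at h
      funext j
      rcases Finset.mem_insert.1 j.2 with hj | hj
      · have : j = ⟨a, Finset.mem_insert_self a s⟩ := Subtype.ext hj
        rw [this]; exact h.2
      · exact congrFun h.1 ⟨j.1, hj⟩
    have heq : condEnt μ (fun ω => restr (insert a s) (fun i => X i ω)) S
        = condEnt μ (fun ω => ((fun j : {j // j ∈ s} => X j.1 ω), X a ω)) S := by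
      unfold condEnt
      have hg : Function.Injective
          (fun p : ({j // j ∈ insert a s} → ZMod 2) × σ =>
            (((fun j : {j // j ∈ s} => p.1 ⟨j.1, Finset.mem_insert_of_mem j.2⟩),
              p.1 ⟨a, Finset.mem_insert_self a s⟩), p.2)) := by
        intro p p' h
        simp only [Prod.mk.injEq] at h
        exact Prod.ext (he (Prod.ext h.1.1 h.1.2)) h.2
      have := ent_comp_inj (μ := μ) _ hg
        (fun ω => (restr (insert a s) (fun i => X i ω), S ω))
      exact congrArg (· - ent μ S) this.symm
    rw [heq, condEnt_chain]
    have hstep : condEnt μ (X a)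
        (fun ω => ((fun i : Fin a.1 => X (Fin.castLE a.2.le i) ω), S ω))
        ≤ condEnt μ (X a) (fun ω => ((fun j : {j // j ∈ s} => X j.1 ω), S ω)) := by
      have hc := condEnt_comp_le (μ := μ) hμ (X a)
        (fun ω => ((fun i : Fin a.1 => X (Fin.castLE a.2.le i) ω), S ω))
        (fun p => ((fun j : {j // j ∈ s} => p.1 ⟨j.1.1, ha j.1 j.2⟩), p.2))
      exact hc
    have hih : ∑ j ∈ s, condEnt μ (X j)
        (fun ω => ((fun i : Fin j.1 => X (Fin.castLE j.2.le i) ω), S ω))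
        ≤ condEnt μ (fun ω => (fun j : {j // j ∈ s} => X j.1 ω)) S := ih
    linarith [hstep, hih]

end AuxLemmas

set_option maxHeartbeats 2000000 in
/-- **Appendix A entropy bound.**
`H(A[H_{V|Z}], T_{(k)}[H_{U_k|VZ}], T_{(k̄)}[H_{U_k̄|V U_k Z}] | Z^n) ≥
(1 − δ_n)(|H_{V|Z}| + |H_{U_k|VZ}| + |H_{U_k̄|V U_k Z}|)` under the i.i.d. source law. -/
theorem appendixA_entropy_bound
    {Ω 𝒵 : Type*} [Fintype Ω] [Fintype 𝒵]
    (μ : Ω → ℝ) (hμ : IsPMF μ)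
    (V Ua Ub : Ω → ZMod 2) (Z : Ω → 𝒵)
    (β : ℝ) (hβ0 : 0 < β) (hβ1 : β < 1 / 2) (m : ℕ) :
    (1 - deltaN β (2 ^ m)) *
        (((highSet μ V Z β m).card : ℝ)
          + ((highSet μ Ua (fun ω => (V ω, Z ω)) β m).card : ℝ)
          + ((highSet μ Ub (fun ω => (V ω, Ua ω, Z ω)) β m).card : ℝ)) ≤
      condEnt (iid μ (2 ^ m))
        (fun ω => secTriple μ V Ua Ub Z β m
          (polarVec V m ω) (polarVec Ua m ω) (polarVec Ub m ω))
        (fun ω => fun i => Z (ω i)) := by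
  classical
  set n := 2 ^ m with hn
  set ν := iid μ n with hnu
  have hν0 : ∀ ω : Fin n → Ω, 0 ≤ ν ω := fun ω => Finset.prod_nonneg fun i _ => hμ.1 (ω i)
  set δ := deltaN β (2 ^ m) with hδ
  set H1 := highSet μ V Z β m with hH1
  set H2 := highSet μ Ua (fun ω => (V ω, Z ω)) β m with hH2
  set H3 := highSet μ Ub (fun ω => (V ω, Ua ω, Z ω)) β m with hH3
  set Zn : (Fin n → Ω) → (Fin n → 𝒵) := fun ω i => Z (ω i) with hZn
  set b1 : (Fin n → Ω) → ({j // j ∈ H1} → ZMod 2) := fun ω => restr H1 (polarVec V m ω) with hb1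
  set b2 : (Fin n → Ω) → ({j // j ∈ H2} → ZMod 2) := fun ω => restr H2 (polarVec Ua m ω) with hb2
  set b3 : (Fin n → Ω) → ({j // j ∈ H3} → ZMod 2) := fun ω => restr H3 (polarVec Ub m ω) with hb3
  have hgoal : condEnt ν
      (fun ω => secTriple μ V Ua Ub Z β m
        (polarVec V m ω) (polarVec Ua m ω) (polarVec Ub m ω)) Zn
      = condEnt ν b1 Zn + condEnt ν b2 (fun ω => (b1 ω, Zn ω))
        + condEnt ν b3 (fun ω => (b2 ω, (b1 ω, Zn ω))) := by
    have h1 := condEnt_chain (μ := ν) b1 (fun ω => (b2 ω, b3 ω)) Zn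
    have h2 := condEnt_chain (μ := ν) b2 b3 (fun ω => (b1 ω, Zn ω))
    calc condEnt ν (fun ω => secTriple μ V Ua Ub Z β m
          (polarVec V m ω) (polarVec Ua m ω) (polarVec Ub m ω)) Zn
        = condEnt ν (fun ω => (b1 ω, (b2 ω, b3 ω))) Zn := rfl
      _ = condEnt ν b1 Zn + condEnt ν (fun ω => (b2 ω, b3 ω)) (fun ω => (b1 ω, Zn ω)) := h1
      _ = condEnt ν b1 Zn + (condEnt ν b2 (fun ω => (b1 ω, Zn ω))
            + condEnt ν b3 (fun ω => (b2 ω, (b1 ω, Zn ω)))) := by rw [h2]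
      _ = _ := by ring
  have hB1 : (1 - δ) * (H1.card : ℝ) ≤ condEnt ν b1 Zn := by
    have hblock := sum_le_condEnt_restr (μ := ν) hν0 (fun j ω => polarVec V m ω j) Zn H1
    have hterm : ∀ j ∈ H1, (1 - δ) ≤ condEnt ν (fun ω => polarVec V m ω j)
        (fun ω => ((fun i : Fin j.1 => polarVec V m ω (Fin.castLE j.2.le i)), Zn ω)) := by
      intro j hj
      rw [hH1] at hj
      simp only [highSet, cfilter, Finset.mem_filter] at hj
      exact hj.2
    calc (1 - δ) * (H1.card : ℝ) = H1.card • (1 - δ) := by rw [nsmul_eq_mul]; ring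
      _ ≤ ∑ j ∈ H1, condEnt ν (fun ω => polarVec V m ω j)
            (fun ω => ((fun i : Fin j.1 => polarVec V m ω (Fin.castLE j.2.le i)), Zn ω)) :=
          Finset.card_nsmul_le_sum H1 _ _ hterm
      _ ≤ _ := hblock
  have hB2 : (1 - δ) * (H2.card : ℝ) ≤ condEnt ν b2 (fun ω => (b1 ω, Zn ω)) := by
    have hblock := sum_le_condEnt_restr (μ := ν) hν0 (fun j ω => polarVec Ua m ω j)
      (fun ω => (b1 ω, Zn ω)) H2
    have hterm : ∀ j ∈ H2, (1 - δ) ≤ condEnt ν (fun ω => polarVec Ua m ω j)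
        (fun ω => ((fun i : Fin j.1 => polarVec Ua m ω (Fin.castLE j.2.le i)),
          (b1 ω, Zn ω))) := by
      intro j hj
      rw [hH2] at hj
      simp only [highSet, cfilter, Finset.mem_filter] at hj
      refine le_trans hj.2 ?_
      have hc := condEnt_comp_le (μ := ν) hν0 (fun ω => polarVec Ua m ω j)
        (fun ω => (prefixVec Ua m j ω, fun i => (V (ω i), Z (ω i))))
        (fun p => (p.1, (restr H1 (Matrix.vecMul (fun i => (p.2 i).1) (polarG m)),
          fun i => (p.2 i).2)))
      exact hc
    calc (1 - δ) * (H2.card : ℝ) = H2.card • (1 - δ) := by rw [nsmul_eq_mul]; ring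
      _ ≤ ∑ j ∈ H2, condEnt ν (fun ω => polarVec Ua m ω j)
            (fun ω => ((fun i : Fin j.1 => polarVec Ua m ω (Fin.castLE j.2.le i)),
              (b1 ω, Zn ω))) :=
          Finset.card_nsmul_le_sum H2 _ _ hterm
      _ ≤ _ := hblock
  have hB3 : (1 - δ) * (H3.card : ℝ) ≤ condEnt ν b3 (fun ω => (b2 ω, (b1 ω, Zn ω))) := by
    have hblock := sum_le_condEnt_restr (μ := ν) hν0 (fun j ω => polarVec Ub m ω j)
      (fun ω => (b2 ω, (b1 ω, Zn ω))) H3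
    have hterm : ∀ j ∈ H3, (1 - δ) ≤ condEnt ν (fun ω => polarVec Ub m ω j)
        (fun ω => ((fun i : Fin j.1 => polarVec Ub m ω (Fin.castLE j.2.le i)),
          (b2 ω, (b1 ω, Zn ω)))) := by
      intro j hj
      rw [hH3] at hj
      simp only [highSet, cfilter, Finset.mem_filter] at hj
      refine le_trans hj.2 ?_
      have hc := condEnt_comp_le (μ := ν) hν0 (fun ω => polarVec Ub m ω j)
        (fun ω => (prefixVec Ub m j ω, fun i => (V (ω i), Ua (ω i), Z (ω i))))
        (fun p => (p.1, (restr H2 (Matrix.vecMul (fun i => (p.2 i).2.1) (polarG m)),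
          (restr H1 (Matrix.vecMul (fun i => (p.2 i).1) (polarG m)),
            fun i => (p.2 i).2.2))))
      exact hc
    calc (1 - δ) * (H3.card : ℝ) = H3.card • (1 - δ) := by rw [nsmul_eq_mul]; ring
      _ ≤ ∑ j ∈ H3, condEnt ν (fun ω => polarVec Ub m ω j)
            (fun ω => ((fun i : Fin j.1 => polarVec Ub m ω (Fin.castLE j.2.le i)),
              (b2 ω, (b1 ω, Zn ω)))) :=
          Finset.card_nsmul_le_sum H3 _ _ hterm
      _ ≤ _ := hblock
  rw [hgoal]
  nlinarith [hB1, hB2, hB3]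




end WTpaper
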